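/- Let o, t, m, r be natural numbers with r ≤ min(o, t+m), and set p := min(o, t). Let R' be a real o×t matrix admitting a singular value decomposition R' = T₁*Σ*T₂ where T₁, T₂ are orthogonal, Σ is an o×t matrix with Σ i j = 0 for i ≠ j (as natural numbers), and the diagonal entries of Σ at positions 0, 1, …, p−1 are strictly decreasing and positive (so R' has p pairwise distinct positive singular values). For each natural number k with max(0, r−p) ≤ k ≤ r, let H_k be the set of all real o×(t⊕m) matrices W = fromColumns W' W'' such that: rank W = r, rank W' = r − k, Crit'(W') holds, and the column space of W'' is contained in the sum of the orthogonal complement of the column space of R' and the column space of W'. Then { W | rank W = r and Crit(W) } = ⋃_{k = max(0, r−p)}^{r} H_k. -/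

import Mathlib

open Matrix

set_option linter.unusedSectionVars false
set_option maxHeartbeats 1000000

/-- The column space of a real matrix `M`, i.e. the range of `x ↦ M.mulVec x`. -/
def colSpace {a b : Type*} [Fintype b] (M : Matrix a b ℝ) : Submodule ℝ (a → ℝ) :=
  LinearMap.range M.mulVecLin

/-- The row space of a real matrix `M`, i.e. the column space of `Mᵀ`. -/
def rowSpace {a b : Type*} [Fintype a] (M : Matrix a b ℝ) : Submodule ℝ (b → ℝ) :=
  colSpace Mᵀ

/-- The orthogonal complement of a subspace of `ℝ^a` with respect to the dot product. -/
def dotOrth {a : Type*} [Fintype a] (S : Submodule ℝ (a → ℝ)) : Submodule ℝ (a → ℝ) where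
  carrier := { v | ∀ x ∈ S, x ⬝ᵥ v = 0 }
  add_mem' := by
    intro v w hv hw x hx
    simp only [Set.mem_setOf_eq] at *
    rw [dotProduct_add, hv x hx, hw x hx, add_zero]
  zero_mem' := by
    intro x hx
    simp
  smul_mem' := by
    intro c v hv x hx
    simp only [Set.mem_setOf_eq] at *
    rw [dotProduct_smul, hv x hx, smul_zero]

/-- Criticality of `Y` for the Frobenius distance to `R'` on the determinantal variety:
`Y − R'` is trace-orthogonal to the tangent space `ℝ^o ⊗ rowspace(Y) + colspace(Y) ⊗ ℝ^t`. -/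
def Crit' {o t : ℕ} (R' Y : Matrix (Fin o) (Fin t) ℝ) : Prop :=
  ∀ N' : Matrix (Fin o) (Fin t) ℝ,
    (∃ N'₁ N'₂, N' = N'₁ + N'₂ ∧ rowSpace N'₁ ≤ rowSpace Y ∧ colSpace N'₂ ≤ colSpace Y) →
    ((Y - R') * N'ᵀ).trace = 0

/-- Criticality of `W` for the seminorm distance `‖· − R‖²_{ΠΠᵀ}` on the determinantal
variety, where `R = (R' | 0)` and `Π = fromBlocks 1 0 0 0`. -/
def Crit {o t m : ℕ} (R' : Matrix (Fin o) (Fin t) ℝ)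
    (W : Matrix (Fin o) (Fin t ⊕ Fin m) ℝ) : Prop :=
  ∀ N : Matrix (Fin o) (Fin t ⊕ Fin m) ℝ,
    (∃ N₁ N₂, N = N₁ + N₂ ∧ rowSpace N₁ ≤ rowSpace W ∧ colSpace N₂ ≤ colSpace W) →
    ((W - Matrix.fromCols R' (0 : Matrix (Fin o) (Fin m) ℝ)) *
        (Matrix.fromBlocks (1 : Matrix (Fin t) (Fin t) ℝ) 0 0
          (0 : Matrix (Fin m) (Fin m) ℝ)) * Nᵀ).trace = 0

/-- The component `H_k` of the critical locus: block matrices `W = (W' | W'')` of rank `r`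
whose left block `W'` has rank `r − k` and is a critical rank-`(r−k)` approximation of `R'`,
and whose right block has column space inside `cspan(R')^⊥ ⊕ cspan(W')`. -/
def Hset {o t m : ℕ} (R' : Matrix (Fin o) (Fin t) ℝ) (r k : ℕ) :
    Set (Matrix (Fin o) (Fin t ⊕ Fin m) ℝ) :=
  { W | ∃ (W' : Matrix (Fin o) (Fin t) ℝ) (W'' : Matrix (Fin o) (Fin m) ℝ),
      W = Matrix.fromCols W' W'' ∧ W.rank = r ∧ W'.rank = r - k ∧ Crit' R' W' ∧
      colSpace W'' ≤ dotOrth (colSpace R') ⊔ colSpace W' }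

section auxGeneral
variable {a b c : Type*} [Fintype a] [Fintype b] [Fintype c]

lemma mem_colSpace {M : Matrix a b ℝ} {v : a → ℝ} :
    v ∈ colSpace M ↔ ∃ x, M.mulVec x = v := LinearMap.mem_range

lemma col_mem_colSpace [DecidableEq b] (M : Matrix a b ℝ) (j : b) :
    (fun i => M i j) ∈ colSpace M :=
  ⟨Pi.single j 1, by ext i; simp [Matrix.mulVecLin_apply]⟩

lemma colSpace_le_iff_exists [DecidableEq c]
    {A : Matrix a c ℝ} {B : Matrix a b ℝ} (h : colSpace A ≤ colSpace B) :
    ∃ C : Matrix b c ℝ, A = B * C := by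
  have hc : ∀ j : c, ∃ x : b → ℝ, B.mulVec x = fun i => A i j := fun j =>
    mem_colSpace.mp (h (col_mem_colSpace A j))
  choose f hf using hc
  refine ⟨Matrix.of (fun i j => f j i), ?_⟩
  ext i j
  have := congrFun (hf j) i
  simpa [Matrix.mul_apply, Matrix.mulVec, dotProduct] using this.symm

lemma rowSpace_le_iff_exists [DecidableEq a]
    {A : Matrix a b ℝ} {B : Matrix c b ℝ} (h : rowSpace A ≤ rowSpace B) :
    ∃ C : Matrix a c ℝ, A = C * B := by
  obtain ⟨C, hC⟩ := colSpace_le_iff_exists (h : colSpace Aᵀ ≤ colSpace Bᵀ)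
  exact ⟨Cᵀ, by rw [← transpose_transpose A, hC, transpose_mul, transpose_transpose]⟩

/-- The generic criticality condition is equivalent to two matrix equations. -/
lemma crit_iff_eqs [DecidableEq a] [DecidableEq b] (M W : Matrix a b ℝ) :
    (∀ N : Matrix a b ℝ,
      (∃ N₁ N₂, N = N₁ + N₂ ∧ rowSpace N₁ ≤ rowSpace W ∧ colSpace N₂ ≤ colSpace W) →
      (M * Nᵀ).trace = 0) ↔ (M * Wᵀ = 0 ∧ Wᵀ * M = 0) := by
  constructor
  · intro h
    constructor
    · ext i i2
      have h1 : rowSpace (vecMulVec (Pi.single i 1) (W i2)) ≤ rowSpace W := by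
        rintro v ⟨x, rfl⟩
        refine ⟨Pi.single i2 (x i), ?_⟩
        ext j
        simp [Matrix.mulVecLin_apply, Matrix.mulVec, Matrix.vecMul, dotProduct,
          vecMulVec_apply, Pi.single_apply, Finset.mul_sum, Finset.sum_ite_eq',
          Finset.sum_ite_eq, ite_mul, mul_comm, mul_left_comm]
      have := h (vecMulVec (Pi.single i 1) (W i2)) ⟨_, 0, (add_zero _).symm, h1, by
        simp [colSpace]⟩
      simp only [Matrix.trace, Matrix.diag, Matrix.mul_apply, Matrix.transpose_apply,
        vecMulVec_apply, Pi.single_apply] at this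
      rw [Matrix.mul_apply]
      rw [Finset.sum_comm] at this
      simpa [ite_mul, mul_comm, mul_left_comm] using this
    · ext b1 b2
      have h2 : colSpace (vecMulVec (fun i => W i b1) (Pi.single b2 1)) ≤ colSpace W := by
        rintro v ⟨x, rfl⟩
        refine ⟨Pi.single b1 (x b2), ?_⟩
        ext j
        simp [Matrix.mulVecLin_apply, Matrix.mulVec, Matrix.vecMul, dotProduct,
          vecMulVec_apply, Pi.single_apply, Finset.mul_sum, Finset.sum_ite_eq',
          Finset.sum_ite_eq, ite_mul, mul_comm, mul_left_comm]
      have := h (vecMulVec (fun i => W i b1) (Pi.single b2 1)) ⟨0, _, (zero_add _).symm, by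
        simp [rowSpace, colSpace], h2⟩
      simp only [Matrix.trace, Matrix.diag, Matrix.mul_apply, Matrix.transpose_apply,
        vecMulVec_apply, Pi.single_apply] at this
      rw [Matrix.mul_apply]
      simpa [ite_mul, mul_ite, mul_comm, mul_left_comm] using this
  · rintro ⟨hMW, hWM⟩ N ⟨N₁, N₂, rfl, hr, hc⟩
    obtain ⟨C₁, rfl⟩ := rowSpace_le_iff_exists hr
    obtain ⟨C₂, rfl⟩ := colSpace_le_iff_exists hc
    rw [transpose_add, Matrix.mul_add, Matrix.trace_add, transpose_mul, transpose_mul,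
      ← Matrix.mul_assoc, hMW, Matrix.zero_mul, Matrix.trace_zero, zero_add,
      Matrix.trace_mul_comm, Matrix.mul_assoc, hWM, Matrix.mul_zero, Matrix.trace_zero]

lemma colSpace_mul (A : Matrix a b ℝ) (B : Matrix b c ℝ) :
    colSpace (A * B) = Submodule.map A.mulVecLin (colSpace B) := by
  unfold colSpace
  rw [Matrix.mulVecLin_mul, LinearMap.range_comp]

lemma colSpace_eq_top [DecidableEq a] {T : Matrix a a ℝ} (h : T * Tᵀ = 1) : colSpace T = ⊤ := by
  rw [eq_top_iff]
  rintro v -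
  exact ⟨Tᵀ.mulVec v, by rw [Matrix.mulVecLin_apply, Matrix.mulVec_mulVec, h, Matrix.one_mulVec]⟩

lemma mem_span_single {o : ℕ} {S : Set (Fin o)} {v : Fin o → ℝ} (hv : ∀ i ∉ S, v i = 0) :
    v ∈ Submodule.span ℝ ((fun i => (Pi.single i 1 : Fin o → ℝ)) '' S) := by
  classical
  have hv' : v = ∑ i : Fin o, v i • (Pi.single i 1 : Fin o → ℝ) := by
    ext j
    simp [Pi.single_apply]
  rw [hv']
  refine Submodule.sum_mem _ fun i _ => ?_
  by_cases hi : i ∈ S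
  · exact Submodule.smul_mem _ _ (Submodule.subset_span ⟨i, hi, rfl⟩)
  · rw [hv i hi, zero_smul]
    exact Submodule.zero_mem _

lemma colSpace_le_dotOrth_iff [DecidableEq b] [DecidableEq c]
    (A : Matrix a b ℝ) (B : Matrix a c ℝ) :
    colSpace A ≤ dotOrth (colSpace B) ↔ Bᵀ * A = 0 := by
  constructor
  · intro h
    ext j k
    have := h (col_mem_colSpace A k) _ (col_mem_colSpace B j)
    simpa [Matrix.mul_apply, dotProduct] using this
  · intro hBA
    rintro v ⟨y, rfl⟩ x ⟨c, rfl⟩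
    simp only [Matrix.mulVecLin_apply]
    rw [dotProduct_mulVec, ← Matrix.mulVec_transpose, Matrix.mulVec_mulVec]
    have h0 : Aᵀ * B = 0 := by
      have := congrArg Matrix.transpose hBA
      rwa [Matrix.transpose_mul, Matrix.transpose_transpose, Matrix.transpose_zero] at this
    rw [h0]
    simp

lemma fromColumns_eq_zero_iff {R : Type*} [Zero R] {m n₁ n₂ : Type*}
    (A : Matrix m n₁ R) (B : Matrix m n₂ R) :
    fromCols A B = 0 ↔ A = 0 ∧ B = 0 := by
  constructor
  · intro h
    constructor <;> ext i j
    · exact congrFun (congrFun h i) (Sum.inl j)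
    · exact congrFun (congrFun h i) (Sum.inr j)
  · rintro ⟨rfl, rfl⟩
    ext i (j | j) <;> rfl

lemma fromRows_eq_zero_iff {R : Type*} [Zero R] {m₁ m₂ n : Type*}
    (A : Matrix m₁ n R) (B : Matrix m₂ n R) :
    fromRows A B = 0 ↔ A = 0 ∧ B = 0 := by
  constructor
  · intro h
    constructor <;> ext i j
    · exact congrFun (congrFun h (Sum.inl i)) j
    · exact congrFun (congrFun h (Sum.inr i)) j
  · rintro ⟨rfl, rfl⟩
    ext (i | i) j <;> rfl

end auxGeneral

lemma crit'_iff_eqs {o t : ℕ} (R' Y : Matrix (Fin o) (Fin t) ℝ) :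
    Crit' R' Y ↔ ((Y - R') * Yᵀ = 0 ∧ Yᵀ * (Y - R') = 0) := by
  unfold Crit'
  exact crit_iff_eqs (Y - R') Y

lemma crit_iff_eqs3 {o t m : ℕ} (R' : Matrix (Fin o) (Fin t) ℝ)
    (W' : Matrix (Fin o) (Fin t) ℝ) (W'' : Matrix (Fin o) (Fin m) ℝ) :
    Crit R' (fromCols W' W'') ↔
      ((W' - R') * W'ᵀ = 0 ∧ W'ᵀ * (W' - R') = 0 ∧ W''ᵀ * (W' - R') = 0) := by
  have hsub : fromCols W' W'' - fromCols R' (0 : Matrix (Fin o) (Fin m) ℝ) =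
      fromCols (W' - R') W'' := by
    ext i (j | j) <;>
      simp [Matrix.sub_apply, fromCols_apply_inl, fromCols_apply_inr]
  have hM : (fromCols W' W'' - fromCols R' (0 : Matrix (Fin o) (Fin m) ℝ)) *
      (fromBlocks (1 : Matrix (Fin t) (Fin t) ℝ) 0 0 (0 : Matrix (Fin m) (Fin m) ℝ)) =
      fromCols (W' - R') (0 : Matrix (Fin o) (Fin m) ℝ) := by
    rw [hsub, fromCols_mul_fromBlocks]
    simp
  unfold Crit
  simp only [hM]
  rw [crit_iff_eqs (fromCols (W' - R') (0 : Matrix (Fin o) (Fin m) ℝ)) (fromCols W' W'')]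
  rw [transpose_fromCols, fromCols_mul_fromRows, Matrix.zero_mul, add_zero]
  rw [fromRows_mul, mul_fromCols, mul_fromCols, Matrix.mul_zero, Matrix.mul_zero]
  rw [fromRows_eq_zero_iff, fromColumns_eq_zero_iff, fromColumns_eq_zero_iff]
  constructor
  · rintro ⟨hA, ⟨hB, -⟩, ⟨hC, -⟩⟩
    exact ⟨hA, hB, hC⟩
  · rintro ⟨hA, hB, hC⟩
    exact ⟨hA, ⟨hB, rfl⟩, ⟨hC, rfl⟩⟩

section auxSVD
variable {o t : ℕ}

lemma sum_sg_row (Sg : Matrix (Fin o) (Fin t) ℝ)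
    (hdiag : ∀ (i : Fin o) (j : Fin t), (i : ℕ) ≠ (j : ℕ) → Sg i j = 0)
    (a : Fin o) (f : Fin t → ℝ) :
    ∑ k, Sg a k * f k = if ha : (a : ℕ) < t then Sg a ⟨a, ha⟩ * f ⟨a, ha⟩ else 0 := by
  split_ifs with ha
  · rw [Finset.sum_eq_single ⟨(a : ℕ), ha⟩]
    · intro k _ hk
      rw [hdiag a k (by simpa [Fin.ext_iff, eq_comm] using hk), zero_mul]
    · simp
  · apply Finset.sum_eq_zero
    intro k _
    rw [hdiag a k (by omega), zero_mul]

lemma sum_sg_col (Sg : Matrix (Fin o) (Fin t) ℝ)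
    (hdiag : ∀ (i : Fin o) (j : Fin t), (i : ℕ) ≠ (j : ℕ) → Sg i j = 0)
    (b : Fin t) (f : Fin o → ℝ) :
    ∑ i, f i * Sg i b = if hb : (b : ℕ) < o then f ⟨b, hb⟩ * Sg ⟨b, hb⟩ b else 0 := by
  split_ifs with hb
  · rw [Finset.sum_eq_single ⟨(b : ℕ), hb⟩]
    · intro k _ hk
      rw [hdiag k b (by simpa [Fin.ext_iff] using hk), mul_zero]
    · simp
  · apply Finset.sum_eq_zero
    intro k _
    rw [hdiag k b (by omega), mul_zero]

/-- Classification of solutions of the critical-point equations in diagonalized form. -/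
lemma diag_classify (Sg : Matrix (Fin o) (Fin t) ℝ)
    (hdiag : ∀ (i : Fin o) (j : Fin t), (i : ℕ) ≠ (j : ℕ) → Sg i j = 0)
    (hpos : ∀ (i : Fin o) (j : Fin t), (i : ℕ) = (j : ℕ) → 0 < Sg i j)
    (hdec : ∀ (i i' : Fin o) (j j' : Fin t), (i : ℕ) = (j : ℕ) → (i' : ℕ) = (j' : ℕ) →
      (i : ℕ) < (i' : ℕ) → Sg i' j' < Sg i j)
    (Z : Matrix (Fin o) (Fin t) ℝ)
    (h1 : (Z - Sg) * Zᵀ = 0) (h2 : Zᵀ * (Z - Sg) = 0) :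
    (∀ (i : Fin o) (j : Fin t), (i : ℕ) ≠ (j : ℕ) → Z i j = 0) ∧
    (∀ (i : Fin o) (j : Fin t), (i : ℕ) = (j : ℕ) → Z i j = 0 ∨ Z i j = Sg i j) := by
  have hZZ : ∀ i i' : Fin o, ∑ k, Z i k * Z i' k = ∑ k, Sg i k * Z i' k := by
    intro i i'
    have := congrFun (congrFun h1 i) i'
    simp only [Matrix.mul_apply, Matrix.sub_apply, Matrix.transpose_apply, Matrix.zero_apply,
      sub_mul] at this
    rw [Finset.sum_sub_distrib] at this
    linarith
  have hZZc : ∀ a b : Fin t, ∑ i, Z i a * Z i b = ∑ i, Z i a * Sg i b := by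
    intro a b
    have := congrFun (congrFun h2 a) b
    simp only [Matrix.mul_apply, Matrix.sub_apply, Matrix.transpose_apply, Matrix.zero_apply,
      mul_sub] at this
    rw [Finset.sum_sub_distrib] at this
    linarith
  have hrow : ∀ i : Fin o, ¬ ((i : ℕ) < t) → ∀ k : Fin t, Z i k = 0 := by
    intro i hi k
    have h := hZZ i i
    rw [sum_sg_row Sg hdiag i, dif_neg hi] at h
    have hsq := (Finset.sum_eq_zero_iff_of_nonneg
      (fun k _ => mul_self_nonneg (Z i k))).mp h k (Finset.mem_univ k)
    nlinarith [hsq]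
  have hcol : ∀ b : Fin t, ¬ ((b : ℕ) < o) → ∀ i : Fin o, Z i b = 0 := by
    intro b hb i
    have h := hZZc b b
    rw [sum_sg_col Sg hdiag b, dif_neg hb] at h
    have hsq := (Finset.sum_eq_zero_iff_of_nonneg
      (fun k _ => mul_self_nonneg (Z k b))).mp h i (Finset.mem_univ i)
    nlinarith [hsq]
  have hsymR : ∀ i i' : Fin o, ∑ k, Sg i k * Z i' k = ∑ k, Sg i' k * Z i k := by
    intro i i'
    rw [← hZZ i i', ← hZZ i' i]
    exact Finset.sum_congr rfl fun k _ => mul_comm _ _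
  have hsymC : ∀ a b : Fin t, ∑ i, Z i a * Sg i b = ∑ i, Z i b * Sg i a := by
    intro a b
    rw [← hZZc a b, ← hZZc b a]
    exact Finset.sum_congr rfl fun k _ => mul_comm _ _
  have hoff : ∀ (i : Fin o) (j : Fin t), (i : ℕ) ≠ (j : ℕ) → Z i j = 0 := by
    intro i j hij
    by_cases hi : (i : ℕ) < t
    · by_cases hj : (j : ℕ) < o
      · set iT : Fin t := ⟨(i : ℕ), hi⟩ with hiT
        set jO : Fin o := ⟨(j : ℕ), hj⟩ with hjO
        have R1 := hsymR i jO
        rw [sum_sg_row Sg hdiag i, sum_sg_row Sg hdiag jO, dif_pos hi] at R1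
        have hj' : ((jO : ℕ) : ℕ) < t := j.isLt
        rw [dif_pos hj'] at R1
        have hjt : (⟨(jO : ℕ), hj'⟩ : Fin t) = j := by ext; simp [hjO]
        rw [hjt, show (⟨(i : ℕ), hi⟩ : Fin t) = iT from rfl] at R1
        have R2 := hsymC iT j
        rw [sum_sg_col Sg hdiag j, sum_sg_col Sg hdiag iT, dif_pos hj] at R2
        have hi' : ((iT : ℕ) : ℕ) < o := i.isLt
        rw [dif_pos hi'] at R2
        have hio : (⟨(iT : ℕ), hi'⟩ : Fin o) = i := by ext; simp [hiT]
        rw [hio] at R2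
        rw [← hjO] at R2
        have ha : 0 < Sg i iT := hpos i iT rfl
        have hb' : 0 < Sg jO j := hpos jO j rfl
        have hne : Sg i iT ≠ Sg jO j := by
          rcases lt_or_gt_of_ne hij with h | h
          · exact ne_of_gt (hdec i jO iT j rfl rfl h)
          · exact ne_of_lt (hdec jO i j iT rfl rfl h)
        have key : Z i j * (Sg i iT * Sg i iT - Sg jO j * Sg jO j) = 0 := by
          linear_combination Sg jO j * R1 - Sg i iT * R2
        rcases mul_eq_zero.mp key with h | h
        · exact h
        · exfalso
          have : Sg i iT * Sg i iT ≠ Sg jO j * Sg jO j := by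
            rcases lt_or_gt_of_ne hne with h' | h' <;> nlinarith
          exact this (by linarith)
      · exact hcol j hj i
    · exact hrow i hi j
  refine ⟨hoff, ?_⟩
  intro i j hij
  have hi : (i : ℕ) < t := hij ▸ j.isLt
  have h := hZZ i i
  rw [sum_sg_row Sg hdiag i, dif_pos hi] at h
  have hiT : (⟨(i : ℕ), hi⟩ : Fin t) = j := by ext; simp [hij]
  rw [hiT] at h
  rw [Finset.sum_eq_single j] at h
  · rcases eq_or_ne (Z i j) 0 with h0 | h0
    · exact Or.inl h0
    · exact Or.inr (mul_right_cancel₀ h0 (by linarith [h]))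
  · intro k _ hk
    rw [hoff i k (by rw [hij]; simpa [Fin.ext_iff, eq_comm] using hk), mul_zero]
  · simp

/-- Column space of a diagonal-like matrix. -/
lemma colSpace_diag (Z : Matrix (Fin o) (Fin t) ℝ)
    (hoff : ∀ (i : Fin o) (j : Fin t), (i : ℕ) ≠ (j : ℕ) → Z i j = 0) :
    colSpace Z = Submodule.span ℝ ((fun i => (Pi.single i 1 : Fin o → ℝ)) ''
      {i : Fin o | ∃ h : (i : ℕ) < t, Z i ⟨(i : ℕ), h⟩ ≠ 0}) := by
  apply le_antisymm
  · rintro v ⟨x, rfl⟩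
    apply mem_span_single
    intro i hi
    simp only [Set.mem_setOf_eq, not_exists, not_not] at hi
    simp only [Matrix.mulVecLin_apply, Matrix.mulVec, dotProduct]
    apply Finset.sum_eq_zero
    intro k _
    by_cases hik : (i : ℕ) = (k : ℕ)
    · have hk : (i : ℕ) < t := hik ▸ k.isLt
      have hkk : k = ⟨(i : ℕ), hk⟩ := Fin.ext hik.symm
      rw [hkk, hi hk, zero_mul]
    · rw [hoff i k hik, zero_mul]
  · rw [Submodule.span_le]
    rintro _ ⟨i, ⟨h, hz⟩, rfl⟩
    refine ⟨Pi.single ⟨(i : ℕ), h⟩ (Z i ⟨(i : ℕ), h⟩)⁻¹, funext fun a => ?_⟩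
    simp only [Matrix.mulVecLin_apply, Matrix.mulVec_single, Pi.smul_apply, op_smul_eq_mul,
      Matrix.col_apply]
    rcases eq_or_ne a i with rfl | ha
    · rw [mul_inv_cancel₀ hz, Pi.single_eq_same]
    · rw [hoff a ⟨(i : ℕ), h⟩ (by simpa [Fin.ext_iff] using ha), zero_mul,
        Pi.single_eq_of_ne ha]

/-- Column space of `T₁ * Z * T₂` for a diagonal-like `Z` and orthogonal `T₂`. -/
lemma colSpace_svd (T₁ : Matrix (Fin o) (Fin o) ℝ)
    (T₂ : Matrix (Fin t) (Fin t) ℝ) (hT₂ : T₂ * T₂ᵀ = 1)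
    (Z : Matrix (Fin o) (Fin t) ℝ)
    (hoff : ∀ (i : Fin o) (j : Fin t), (i : ℕ) ≠ (j : ℕ) → Z i j = 0) :
    colSpace (T₁ * Z * T₂) = Submodule.span ℝ ((fun i => T₁ᵀ i) ''
      {i : Fin o | ∃ h : (i : ℕ) < t, Z i ⟨(i : ℕ), h⟩ ≠ 0}) := by
  rw [colSpace_mul (T₁ * Z) T₂, colSpace_eq_top hT₂, Submodule.map_top]
  have : LinearMap.range (T₁ * Z).mulVecLin = colSpace (T₁ * Z) := rfl
  rw [this, colSpace_mul T₁ Z, colSpace_diag Z hoff, Submodule.map_span,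
    ← Set.image_comp]
  congr 1
  apply Set.image_congr
  intro i _
  ext a
  simp [Matrix.mulVecLin_apply]

/-- Orthogonal complement of a span of columns of an orthogonal matrix. -/
lemma dotOrth_span (T₁ : Matrix (Fin o) (Fin o) ℝ) (hT₁ : T₁ * T₁ᵀ = 1)
    (A : Set (Fin o)) :
    dotOrth (Submodule.span ℝ ((fun i => T₁ᵀ i) '' A)) =
      Submodule.span ℝ ((fun i => T₁ᵀ i) '' Aᶜ) := by
  have hT₁' : T₁ᵀ * T₁ = 1 := mul_eq_one_comm.mp hT₁
  have hu : ∀ i j : Fin o, T₁ᵀ i ⬝ᵥ T₁ᵀ j = if i = j then 1 else 0 := by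
    intro i j
    have := congrFun (congrFun hT₁' i) j
    simpa [Matrix.mul_apply, dotProduct, Matrix.one_apply] using this
  have hexp : ∀ v : Fin o → ℝ, v = ∑ j : Fin o, (T₁ᵀ j ⬝ᵥ v) • T₁ᵀ j := by
    intro v
    have hv : T₁ *ᵥ (T₁ᵀ *ᵥ v) = v := by
      rw [Matrix.mulVec_mulVec, hT₁, Matrix.one_mulVec]
    ext a
    have := congrFun hv a
    simp only [Matrix.mulVec, dotProduct, Finset.sum_apply, Pi.smul_apply,
      smul_eq_mul, Matrix.transpose_apply] at this ⊢
    rw [← this]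
    exact Finset.sum_congr rfl fun j _ => by ring_nf
  apply le_antisymm
  · intro v hv
    have hv' : ∀ i ∈ A, T₁ᵀ i ⬝ᵥ v = 0 := fun i hi =>
      hv _ (Submodule.subset_span ⟨i, hi, rfl⟩)
    rw [hexp v]
    refine Submodule.sum_mem _ fun j _ => ?_
    by_cases hj : j ∈ A
    · rw [hv' j hj, zero_smul]
      exact Submodule.zero_mem _
    · exact Submodule.smul_mem _ _ (Submodule.subset_span ⟨j, hj, rfl⟩)
  · rw [Submodule.span_le]
    rintro _ ⟨j, hj, rfl⟩
    intro x hx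
    induction hx using Submodule.span_induction with
    | mem x h =>
      obtain ⟨i, hi, rfl⟩ := h
      rw [hu i j, if_neg (by rintro rfl; exact hj hi)]
    | zero => simp
    | add x y _ _ hx hy => rw [add_dotProduct, hx, hy, add_zero]
    | smul c x _ hx => rw [smul_dotProduct, hx, smul_zero]

/-- The key subspace identity at a critical point. -/
lemma key_spaces
    (R' : Matrix (Fin o) (Fin t) ℝ)
    (T₁ : Matrix (Fin o) (Fin o) ℝ) (hT₁ : T₁ * T₁ᵀ = 1)
    (T₂ : Matrix (Fin t) (Fin t) ℝ) (hT₂ : T₂ * T₂ᵀ = 1)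
    (Sg : Matrix (Fin o) (Fin t) ℝ)
    (hdiag : ∀ (i : Fin o) (j : Fin t), (i : ℕ) ≠ (j : ℕ) → Sg i j = 0)
    (hpos : ∀ (i : Fin o) (j : Fin t), (i : ℕ) = (j : ℕ) → 0 < Sg i j)
    (hdec : ∀ (i i' : Fin o) (j j' : Fin t), (i : ℕ) = (j : ℕ) → (i' : ℕ) = (j' : ℕ) →
      (i : ℕ) < (i' : ℕ) → Sg i' j' < Sg i j)
    (hSVD : R' = T₁ * Sg * T₂)
    (W' : Matrix (Fin o) (Fin t) ℝ)
    (h1 : (W' - R') * W'ᵀ = 0) (h2 : W'ᵀ * (W' - R') = 0) :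
    dotOrth (colSpace (W' - R')) = dotOrth (colSpace R') ⊔ colSpace W' := by
  have hT₁' : T₁ᵀ * T₁ = 1 := mul_eq_one_comm.mp hT₁
  have hT₂' : T₂ᵀ * T₂ = 1 := mul_eq_one_comm.mp hT₂
  have c1 : ∀ (n : ℕ) (X : Matrix (Fin o) (Fin n) ℝ), T₁ᵀ * (T₁ * X) = X := fun n X => by
    rw [← Matrix.mul_assoc, hT₁', Matrix.one_mul]
  have c1' : ∀ (n : ℕ) (X : Matrix (Fin o) (Fin n) ℝ), T₁ * (T₁ᵀ * X) = X := fun n X => by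
    rw [← Matrix.mul_assoc, hT₁, Matrix.one_mul]
  have c2 : ∀ (n : ℕ) (X : Matrix (Fin t) (Fin n) ℝ), T₂ * (T₂ᵀ * X) = X := fun n X => by
    rw [← Matrix.mul_assoc, hT₂, Matrix.one_mul]
  have c2' : ∀ (n : ℕ) (X : Matrix (Fin t) (Fin n) ℝ), T₂ᵀ * (T₂ * X) = X := fun n X => by
    rw [← Matrix.mul_assoc, hT₂', Matrix.one_mul]
  obtain ⟨Z, hY⟩ : ∃ Z : Matrix (Fin o) (Fin t) ℝ, T₁ * Z * T₂ = W' :=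
    ⟨T₁ᵀ * W' * T₂ᵀ, by
      simp only [Matrix.mul_assoc]
      rw [hT₂', Matrix.mul_one]
      exact c1' t W'⟩
  have hSg : T₁ * Sg * T₂ = R' := hSVD.symm
  have hD : T₁ * (Z - Sg) * T₂ = W' - R' := by
    rw [Matrix.mul_sub, Matrix.sub_mul, hY, hSg]
  have hz1 : (Z - Sg) * Zᵀ = 0 := by
    have e : T₁ * ((Z - Sg) * Zᵀ) * T₁ᵀ = (W' - R') * W'ᵀ := by
      rw [← hD, ← hY, Matrix.transpose_mul, Matrix.transpose_mul]
      simp only [Matrix.mul_assoc, c2]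
    have e2 : T₁ᵀ * (T₁ * ((Z - Sg) * Zᵀ) * T₁ᵀ) * T₁ = (Z - Sg) * Zᵀ := by
      simp only [Matrix.mul_assoc]
      rw [hT₁', Matrix.mul_one]
      exact c1 o _
    rw [← e2, e, h1, Matrix.mul_zero, Matrix.zero_mul]
  have hz2 : Zᵀ * (Z - Sg) = 0 := by
    have e : T₂ᵀ * (Zᵀ * (Z - Sg)) * T₂ = W'ᵀ * (W' - R') := by
      rw [← hD, ← hY, Matrix.transpose_mul, Matrix.transpose_mul]
      simp only [Matrix.mul_assoc, c1]
    have e2 : T₂ * (T₂ᵀ * (Zᵀ * (Z - Sg)) * T₂) * T₂ᵀ = Zᵀ * (Z - Sg) := by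
      simp only [Matrix.mul_assoc]
      rw [hT₂, Matrix.mul_one]
      exact c2 t _
    rw [← e2, e, h2, Matrix.mul_zero, Matrix.zero_mul]
  obtain ⟨hoffZ, hdiagZ⟩ := diag_classify Sg hdiag hpos hdec Z hz1 hz2
  have hoffD : ∀ (i : Fin o) (j : Fin t), (i : ℕ) ≠ (j : ℕ) → (Z - Sg) i j = 0 := by
    intro i j hij
    rw [Matrix.sub_apply, hoffZ i j hij, hdiag i j hij, sub_zero]
  have colW : colSpace W' = Submodule.span ℝ ((fun i => T₁ᵀ i) ''
      {i : Fin o | ∃ h : (i : ℕ) < t, Z i ⟨(i : ℕ), h⟩ ≠ 0}) := by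
    rw [← hY]; exact colSpace_svd T₁ T₂ hT₂ Z hoffZ
  have colR : colSpace R' = Submodule.span ℝ ((fun i => T₁ᵀ i) ''
      {i : Fin o | ∃ h : (i : ℕ) < t, Sg i ⟨(i : ℕ), h⟩ ≠ 0}) := by
    rw [hSVD]; exact colSpace_svd T₁ T₂ hT₂ Sg hdiag
  have colD : colSpace (W' - R') = Submodule.span ℝ ((fun i => T₁ᵀ i) ''
      {i : Fin o | ∃ h : (i : ℕ) < t, (Z - Sg) i ⟨(i : ℕ), h⟩ ≠ 0}) := by
    rw [← hD]; exact colSpace_svd T₁ T₂ hT₂ (Z - Sg) hoffD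
  have hsets : {i : Fin o | ∃ h : (i : ℕ) < t, (Z - Sg) i ⟨(i : ℕ), h⟩ ≠ 0}ᶜ =
      {i : Fin o | ∃ h : (i : ℕ) < t, Sg i ⟨(i : ℕ), h⟩ ≠ 0}ᶜ ∪
      {i : Fin o | ∃ h : (i : ℕ) < t, Z i ⟨(i : ℕ), h⟩ ≠ 0} := by
    ext i
    simp only [Set.mem_compl_iff, Set.mem_union, Set.mem_setOf_eq, not_exists, not_not]
    by_cases hit : (i : ℕ) < t
    · rcases hdiagZ i ⟨(i : ℕ), hit⟩ rfl with hz | hz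
      · constructor
        · intro hall
          have := hall hit
          rw [Matrix.sub_apply, hz, zero_sub, neg_eq_zero] at this
          exact absurd this (hpos i ⟨(i : ℕ), hit⟩ rfl).ne'
        · rintro (hall | ⟨h', hZ⟩)
          · exact absurd (hall hit) (hpos i ⟨(i : ℕ), hit⟩ rfl).ne'
          · exact absurd hz hZ
      · constructor
        · intro _
          right
          exact ⟨hit, by rw [hz]; exact (hpos i ⟨(i : ℕ), hit⟩ rfl).ne'⟩
        · intro _ h'
          rw [Matrix.sub_apply, hz, sub_self]
    · constructor
      · intro _
        left
        intro h'
        exact absurd h' hit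
      · intro _ h'
        exact absurd h' hit
  rw [colD, dotOrth_span T₁ hT₁, hsets, Set.image_union, Submodule.span_union,
    colR, dotOrth_span T₁ hT₁, colW]

end auxSVD

/-- Theorem 4.2 of the paper: for a matrix `R'` with pairwise distinct positive singular
values, the critical points of rank exactly `r` of the degenerate quadratic optimization
on the determinantal variety are exactly `⋃_{k = max(0, r−p)}^{r} H_k`, with `p = min o t`. -/
theorem critical_points_determinantal (o t m r : ℕ) (hr : r ≤ min o (t + m))
    (R' : Matrix (Fin o) (Fin t) ℝ)
    (T₁ : Matrix (Fin o) (Fin o) ℝ) (hT₁ : T₁ * T₁ᵀ = 1)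
    (T₂ : Matrix (Fin t) (Fin t) ℝ) (hT₂ : T₂ * T₂ᵀ = 1)
    (Sg : Matrix (Fin o) (Fin t) ℝ)
    (hdiag : ∀ (i : Fin o) (j : Fin t), (i : ℕ) ≠ (j : ℕ) → Sg i j = 0)
    (hpos : ∀ (i : Fin o) (j : Fin t), (i : ℕ) = (j : ℕ) → 0 < Sg i j)
    (hdec : ∀ (i i' : Fin o) (j j' : Fin t), (i : ℕ) = (j : ℕ) → (i' : ℕ) = (j' : ℕ) →
      (i : ℕ) < (i' : ℕ) → Sg i' j' < Sg i j)
    (hSVD : R' = T₁ * Sg * T₂) :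
    { W : Matrix (Fin o) (Fin t ⊕ Fin m) ℝ | W.rank = r ∧ Crit R' W } =
      ⋃ k ∈ Set.Icc (max 0 (r - min o t)) r, Hset (m := m) R' r k := by
  ext W
  simp only [Set.mem_setOf_eq, Set.mem_iUnion, Set.mem_Icc, exists_prop, Hset]
  constructor
  · rintro ⟨hrank, hcrit⟩
    obtain ⟨W', W'', hW⟩ : ∃ W' W'', W = fromCols W' W'' :=
      ⟨W.toCols₁, W.toCols₂, (fromCols_toCols W).symm⟩
    rw [hW, crit_iff_eqs3] at hcrit
    obtain ⟨h1, h2, h3⟩ := hcrit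
    have hkey := key_spaces R' T₁ hT₁ T₂ hT₂ Sg hdiag hpos hdec hSVD W' h1 h2
    have hcc : colSpace W'' ≤ dotOrth (colSpace R') ⊔ colSpace W' := by
      rw [← hkey]
      rw [colSpace_le_dotOrth_iff]
      have := congrArg Matrix.transpose h3
      rwa [Matrix.transpose_mul, Matrix.transpose_transpose, Matrix.transpose_zero] at this
    have hle : colSpace W' ≤ colSpace W := by
      rintro v ⟨x, rfl⟩
      refine ⟨Sum.elim x 0, ?_⟩
      rw [Matrix.mulVecLin_apply, Matrix.mulVecLin_apply, hW, fromCols_mulVec_sumElim]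
      simp
    have hr1 : W'.rank ≤ W.rank := Submodule.finrank_mono hle
    have hro : W'.rank ≤ o := W'.rank_le_height
    have hrt : W'.rank ≤ t := W'.rank_le_width
    exact ⟨r - W'.rank, ⟨by omega, by omega⟩, W', W'', hW, hrank, by omega,
      (crit'_iff_eqs R' W').mpr ⟨h1, h2⟩, hcc⟩
  · rintro ⟨k, hk, W', W'', hW, hrank, hrk', hcrit', hcc⟩
    refine ⟨hrank, ?_⟩
    obtain ⟨h1, h2⟩ := (crit'_iff_eqs R' W').mp hcrit'
    have hkey := key_spaces R' T₁ hT₁ T₂ hT₂ Sg hdiag hpos hdec hSVD W' h1 h2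
    rw [hW, crit_iff_eqs3]
    refine ⟨h1, h2, ?_⟩
    have hsub : colSpace W'' ≤ dotOrth (colSpace (W' - R')) := by
      rw [hkey]; exact hcc
    have h0 := (colSpace_le_dotOrth_iff W'' (W' - R')).mp hsub
    have := congrArg Matrix.transpose h0
    rwa [Matrix.transpose_mul, Matrix.transpose_transpose, Matrix.transpose_zero] at this
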